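/- Pointwise algebraic inequality: for any C² functions φ > 0, ζ on an open set, and any real a ≥ 0, at every point Δφ · Δ(ζ²/φ) − |Δζ|² = −(ζφ^{−1}Δφ − Δζ)² − 2(−φ^{−1}Δφ)|∇ζ − ζφ^{−1}∇φ|², so in particular if −Δφ ≥ 0 then Δφ·Δ(ζ²/φ) ≤ |Δζ|². -/

import Mathlib

/-- The Euclidean Laplacian of `f : ℝ^N → ℝ`, as the sum of second partial derivatives. -/
noncomputable def lap {N : ℕ} (f : EuclideanSpace ℝ (Fin N) → ℝ)
    (x : EuclideanSpace ℝ (Fin N)) : ℝ :=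
  ∑ i : Fin N,
    fderiv ℝ (fun y => fderiv ℝ f y (EuclideanSpace.single i 1)) x (EuclideanSpace.single i 1)

/-- Pointwise algebraic identity: for `C²` functions `φ > 0` and `ζ` on an open set, at every
point `Δφ·Δ(ζ²/φ) − |Δζ|² = −(ζφ⁻¹Δφ − Δζ)² − 2(−φ⁻¹Δφ)|∇ζ − ζφ⁻¹∇φ|²`; in particular if
`−Δφ ≥ 0` then `Δφ·Δ(ζ²/φ) ≤ |Δζ|²`. -/
theorem stmt12 {N : ℕ} (Ω : Set (EuclideanSpace ℝ (Fin N))) (hΩ : IsOpen Ω)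
    (φ ζ : EuclideanSpace ℝ (Fin N) → ℝ)
    (hφ : ContDiffOn ℝ 2 φ Ω) (hζ : ContDiffOn ℝ 2 ζ Ω)
    (hφpos : ∀ x ∈ Ω, 0 < φ x) :
    ∀ x ∈ Ω,
      (lap φ x * lap (fun y => (ζ y) ^ 2 / φ y) x - (lap ζ x) ^ 2
          = -(ζ x * (φ x)⁻¹ * lap φ x - lap ζ x) ^ 2
            - 2 * (-(φ x)⁻¹ * lap φ x)
              * ‖gradient ζ x - ζ x • (φ x)⁻¹ • gradient φ x‖ ^ 2)
      ∧ (0 ≤ -lap φ x →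
          lap φ x * lap (fun y => (ζ y) ^ 2 / φ y) x ≤ (lap ζ x) ^ 2) := by
  intro x hx
  have hφx : φ x ≠ 0 := (hφpos x hx).ne'
  have hfun : (fun y => (ζ y) ^ 2 / φ y) = fun y => ζ y * ζ y * (φ y)⁻¹ := by
    funext z; rw [sq, div_eq_mul_inv]
  rw [hfun]
  -- first-order differentiability on Ω
  have hdζ : ∀ y ∈ Ω, DifferentiableAt ℝ ζ y := fun y hy =>
    (hζ.contDiffAt (hΩ.mem_nhds hy)).differentiableAt two_ne_zero
  have hdφ : ∀ y ∈ Ω, DifferentiableAt ℝ φ y := fun y hy =>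
    (hφ.contDiffAt (hΩ.mem_nhds hy)).differentiableAt two_ne_zero
  -- second-order differentiability at x
  have hfζ : ContDiffAt ℝ 1 (fderiv ℝ ζ) x :=
    (hζ.contDiffAt (hΩ.mem_nhds hx)).fderiv_right (by norm_num)
  have hfφ : ContDiffAt ℝ 1 (fderiv ℝ φ) x :=
    (hφ.contDiffAt (hΩ.mem_nhds hx)).fderiv_right (by norm_num)
  have hu : ∀ i : Fin N,
      DifferentiableAt ℝ (fun y => fderiv ℝ ζ y (EuclideanSpace.single i 1)) x := fun i =>
    (hfζ.differentiableAt one_ne_zero).clm_apply (differentiableAt_const _)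
  have hv : ∀ i : Fin N,
      DifferentiableAt ℝ (fun y => fderiv ℝ φ y (EuclideanSpace.single i 1)) x := fun i =>
    (hfφ.differentiableAt one_ne_zero).clm_apply (differentiableAt_const _)
  -- Claim A: formula for the first derivative of ζ²/φ in direction i, near x
  have claimA : ∀ i : Fin N,
      (fun y => fderiv ℝ (fun z => ζ z * ζ z * (φ z)⁻¹) y (EuclideanSpace.single i 1))
        =ᶠ[nhds x] fun y =>
          2 * ζ y * (φ y)⁻¹ * fderiv ℝ ζ y (EuclideanSpace.single i 1)
            - ζ y * ζ y * (φ y)⁻¹ * (φ y)⁻¹ * fderiv ℝ φ y (EuclideanSpace.single i 1) := by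
    intro i
    filter_upwards [hΩ.mem_nhds hx] with y hy
    have hZ := (hdζ y hy).hasFDerivAt
    have hP := (hdφ y hy).hasFDerivAt
    have hinv : HasFDerivAt (fun z => (φ z)⁻¹) ((-((φ y) ^ 2)⁻¹) • fderiv ℝ φ y) y :=
      (hasDerivAt_inv (hφpos y hy).ne').comp_hasFDerivAt y hP
    have hH := (hZ.mul hZ).mul hinv
    rw [HasFDerivAt.fderiv (f := fun z => ζ z * ζ z * (φ z)⁻¹) hH]
    simp only [ContinuousLinearMap.add_apply, ContinuousLinearMap.smul_apply, smul_eq_mul,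
      ContinuousLinearMap.neg_apply, Pi.mul_apply, Pi.pow_apply]
    rw [← inv_pow]
    ring
  -- key second-derivative computation
  have key : ∀ i : Fin N,
      fderiv ℝ (fun y => fderiv ℝ (fun z => ζ z * ζ z * (φ z)⁻¹) y (EuclideanSpace.single i 1)) x
          (EuclideanSpace.single i 1)
        = 2 * (φ x)⁻¹ * (fderiv ℝ ζ x (EuclideanSpace.single i 1)) ^ 2
          + 2 * ζ x * (φ x)⁻¹
            * (fderiv ℝ (fun y => fderiv ℝ ζ y (EuclideanSpace.single i 1)) x
                (EuclideanSpace.single i 1))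
          - 4 * ζ x * ((φ x)⁻¹) ^ 2 * (fderiv ℝ ζ x (EuclideanSpace.single i 1)
              * fderiv ℝ φ x (EuclideanSpace.single i 1))
          + 2 * ζ x ^ 2 * ((φ x)⁻¹) ^ 3 * (fderiv ℝ φ x (EuclideanSpace.single i 1)) ^ 2
          - ζ x ^ 2 * ((φ x)⁻¹) ^ 2
            * (fderiv ℝ (fun y => fderiv ℝ φ y (EuclideanSpace.single i 1)) x
                (EuclideanSpace.single i 1)) := by
    intro i
    rw [(claimA i).fderiv_eq]
    have hZ := (hdζ x hx).hasFDerivAt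
    have hP := (hdφ x hx).hasFDerivAt
    have hU := (hu i).hasFDerivAt
    have hV := (hv i).hasFDerivAt
    have hinv : HasFDerivAt (fun z => (φ z)⁻¹) ((-((φ x) ^ 2)⁻¹) • fderiv ℝ φ x) x :=
      (hasDerivAt_inv hφx).comp_hasFDerivAt x hP
    have hG := (((hZ.const_mul 2).mul hinv).mul hU).sub
      ((((hZ.mul hZ).mul hinv).mul hinv).mul hV)
    rw [HasFDerivAt.fderiv (f := fun y => 2 * ζ y * (φ y)⁻¹ * fderiv ℝ ζ y (EuclideanSpace.single i 1)
              - ζ y * ζ y * (φ y)⁻¹ * (φ y)⁻¹ * fderiv ℝ φ y (EuclideanSpace.single i 1)) hG]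
    simp only [ContinuousLinearMap.add_apply, ContinuousLinearMap.sub_apply,
      ContinuousLinearMap.smul_apply, smul_eq_mul, ContinuousLinearMap.neg_apply, Pi.mul_apply, Pi.pow_apply]
    rw [← inv_pow]
    ring
  -- laplacian formula for ζ²/φ at x
  have hlapH : lap (fun z => ζ z * ζ z * (φ z)⁻¹) x
      = 2 * (φ x)⁻¹ * (∑ i, (fderiv ℝ ζ x (EuclideanSpace.single i 1)) ^ 2)
        + 2 * ζ x * (φ x)⁻¹ * lap ζ x
        - 4 * ζ x * ((φ x)⁻¹) ^ 2 * (∑ i, fderiv ℝ ζ x (EuclideanSpace.single i 1)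
            * fderiv ℝ φ x (EuclideanSpace.single i 1))
        + 2 * ζ x ^ 2 * ((φ x)⁻¹) ^ 3 * (∑ i, (fderiv ℝ φ x (EuclideanSpace.single i 1)) ^ 2)
        - ζ x ^ 2 * ((φ x)⁻¹) ^ 2 * lap φ x := by
    unfold lap
    rw [Finset.sum_congr rfl (fun i _ => key i)]
    simp only [Finset.sum_add_distrib, Finset.sum_sub_distrib, ← Finset.mul_sum]
  -- gradient components
  have hgrad : ∀ (f : EuclideanSpace ℝ (Fin N) → ℝ) (i : Fin N),
      gradient f x i = fderiv ℝ f x (EuclideanSpace.single i 1) := by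
    intro f i
    have h1 : (inner ℝ (gradient f x) (EuclideanSpace.single i (1:ℝ)) : ℝ)
        = fderiv ℝ f x (EuclideanSpace.single i 1) := InnerProductSpace.toDual_symm_apply
    rw [← h1, EuclideanSpace.inner_single_right]
    simp
  -- norm formula
  have hnorm : ‖gradient ζ x - ζ x • (φ x)⁻¹ • gradient φ x‖ ^ 2
      = (∑ i, (fderiv ℝ ζ x (EuclideanSpace.single i 1)) ^ 2)
        - 2 * ζ x * (φ x)⁻¹ * (∑ i, fderiv ℝ ζ x (EuclideanSpace.single i 1)
            * fderiv ℝ φ x (EuclideanSpace.single i 1))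
        + ζ x ^ 2 * ((φ x)⁻¹) ^ 2
          * (∑ i, (fderiv ℝ φ x (EuclideanSpace.single i 1)) ^ 2) := by
    rw [EuclideanSpace.norm_eq, Real.sq_sqrt (by positivity)]
    have step : ∀ i : Fin N, ‖(gradient ζ x - ζ x • (φ x)⁻¹ • gradient φ x) i‖ ^ 2
        = (fderiv ℝ ζ x (EuclideanSpace.single i 1)) ^ 2
          - 2 * ζ x * (φ x)⁻¹ * (fderiv ℝ ζ x (EuclideanSpace.single i 1)
              * fderiv ℝ φ x (EuclideanSpace.single i 1))
          + ζ x ^ 2 * ((φ x)⁻¹) ^ 2 * (fderiv ℝ φ x (EuclideanSpace.single i 1)) ^ 2 := by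
      intro i
      rw [Real.norm_eq_abs, sq_abs]
      have hw : (gradient ζ x - ζ x • (φ x)⁻¹ • gradient φ x) i
          = fderiv ℝ ζ x (EuclideanSpace.single i 1)
            - ζ x * ((φ x)⁻¹ * fderiv ℝ φ x (EuclideanSpace.single i 1)) := by
        simp [hgrad]
      rw [hw]; ring
    rw [Finset.sum_congr rfl (fun i _ => step i)]
    simp only [Finset.sum_add_distrib, Finset.sum_sub_distrib, ← Finset.mul_sum]
  constructor
  · rw [hlapH, hnorm]; ring
  · intro hB
    have hid : lap φ x * lap (fun z => ζ z * ζ z * (φ z)⁻¹) x - (lap ζ x) ^ 2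
        = -(ζ x * (φ x)⁻¹ * lap φ x - lap ζ x) ^ 2
          - 2 * (-(φ x)⁻¹ * lap φ x)
            * ‖gradient ζ x - ζ x • (φ x)⁻¹ • gradient φ x‖ ^ 2 := by
      rw [hlapH, hnorm]; ring
    nlinarith [sq_nonneg (ζ x * (φ x)⁻¹ * lap φ x - lap ζ x),
      mul_nonneg (mul_nonneg (inv_nonneg.2 (hφpos x hx).le) hB)
        (sq_nonneg ‖gradient ζ x - ζ x • (φ x)⁻¹ • gradient φ x‖)]
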